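/- arXiv:1910.12672 — 2 statements merged into one kernel-verified Lean document; each statement's English description precedes it below -/
import Mathlib

section
/- Let Ω ⊂ ℝⁿ (n ∈ {2,3}) be a bounded, strongly Lipschitz domain, ξ₁, ξ₂, σ, ρ > 0 fixed, and define the anisotropy operator a : L²(Ω, ℝ³) → L^∞(Ω) by a[u](x) = exp(−‖(𝒢_ρ ∗ D𝒢_σ ∗ u)(x)‖₂² / ξ₁) + ξ₂, where 𝒢_σ, 𝒢_ρ are Gaussian kernels with standard deviations σ, ρ. Then a satisfies: (A1) ξ₂ ≤ c_a < a[u](x) < C_a for constants 0 < c_a < C_a, all u and a.e. x; (A2) u_k ⇀ u weakly in L²(Ω, ℝ³) implies a[u_k] → a[u] in L^∞(Ω); and (A3) for every bounded neighborhood 𝒰 ⊂ L²(Ω, ℝ³) there exists L_a > 0 with ‖a[u] − a[ũ]‖_{L^∞(Ω)} ≤ L_a ‖u − ũ‖_{L²(Ω)} for all u, ũ ∈ 𝒰. -/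
open MeasureTheory Filter Topology Matrix Set
open scoped ENNReal

noncomputable section

attribute [local instance] Matrix.frobeniusNormedAddCommGroup Matrix.frobeniusNormedSpace

/-- Euclidean space `ℝⁿ`. -/
abbrev E (n : ℕ) := EuclideanSpace ℝ (Fin n)

/-- The feature target space `ℝ^{3+C}`. -/
abbrev Feat (C : ℕ) := EuclideanSpace ℝ (Fin (3 + C))

/-- Jacobian matrix `Dφ(x)` of a map `φ : ℝⁿ → ℝⁿ`. -/
def jac {n : ℕ} (φ : E n → E n) (x : E n) : Matrix (Fin n) (Fin n) ℝ :=
  Matrix.of fun i j => fderiv ℝ φ x (EuclideanSpace.single j 1) i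

/-- Squared Frobenius norm of a matrix. -/
def frobSq {n : ℕ} (A : Matrix (Fin n) (Fin n) ℝ) : ℝ := ∑ i, ∑ j, (A i j)^2

/-- Frobenius norm of a matrix. -/
def frobNorm {n : ℕ} (A : Matrix (Fin n) (Fin n) ℝ) : ℝ := Real.sqrt (frobSq A)

/-- Symmetric part `A^sym = (A + Aᵀ)/2`. -/
def symPart {n : ℕ} (A : Matrix (Fin n) (Fin n) ℝ) : Matrix (Fin n) (Fin n) ℝ :=
  (1/2 : ℝ) • (A + Aᵀ)

/-- Projection `𝒫` of a feature map onto its RGB image component (the first 3 channels). -/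
def Pproj {n C : ℕ} (f : E n → Feat C) : E n → E 3 :=
  fun x => WithLp.toLp 2 (fun i => f x (Fin.castAdd C i))

/-- Squared `L²(Ω)`-norm. -/
def l2sq {n d : ℕ} (Ω : Set (E n)) (f : E n → EuclideanSpace ℝ (Fin d)) : ℝ :=
  ∫ x in Ω, ‖f x‖^2

/-- `L²(Ω)`-distance. -/
def l2dist {n d : ℕ} (Ω : Set (E n)) (f g : E n → EuclideanSpace ℝ (Fin d)) : ℝ :=
  Real.sqrt (∫ x in Ω, ‖f x - g x‖^2)

/-- Squared `H^m(Ω)`-norm: `‖f‖²_{H^m} = Σ_{j≤m} ‖D^j f‖²_{L²(Ω)}`. -/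
def hmNormSq {n : ℕ} (Ω : Set (E n)) (m : ℕ) (φ : E n → E n) : ℝ :=
  ∑ j ∈ Finset.range (m+1), ∫ x in Ω, ‖iteratedFDeriv ℝ j φ x‖^2

/-- Weak convergence `u_k ⇀ u` in `L²(Ω, ℝ^d)`. -/
def WeakL2 {n d : ℕ} (Ω : Set (E n)) (u : ℕ → E n → EuclideanSpace ℝ (Fin d))
    (ul : E n → EuclideanSpace ℝ (Fin d)) : Prop :=
  (∀ k, MemLp (u k) 2 (volume.restrict Ω)) ∧ MemLp ul 2 (volume.restrict Ω) ∧
  ∀ g : E n → EuclideanSpace ℝ (Fin d), MemLp g 2 (volume.restrict Ω) →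
    Tendsto (fun k => ∫ x in Ω, (inner ℝ (u k x) (g x) : ℝ)) atTop
      (𝓝 (∫ x in Ω, (inner ℝ (ul x) (g x) : ℝ)))

/-- Convergence `b_k → b` in `L^∞(Ω)`. -/
def LinfTendsto {n : ℕ} (Ω : Set (E n)) (b : ℕ → E n → ℝ) (bl : E n → ℝ) : Prop :=
  Tendsto (fun k => eLpNorm (fun x => b k x - bl x) ⊤ (volume.restrict Ω)) atTop (𝓝 0)

/-- Assumption (A1): uniform bounds `c_a < a[u](x) < C_a` for a.e. `x ∈ Ω` and all `u`. -/
def AssumpA1 {n : ℕ} (Ω : Set (E n)) (A : (E n → E 3) → E n → ℝ) (ca Ca : ℝ) : Prop :=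
  0 < ca ∧ ca < Ca ∧ ∀ u : E n → E 3, ∀ᵐ x ∂(volume.restrict Ω), ca < A u x ∧ A u x < Ca

/-- Assumption (A2): `u_k ⇀ u` in `L²(Ω,ℝ³)` implies `a[u_k] → a[u]` in `L^∞(Ω)`. -/
def AssumpA2 {n : ℕ} (Ω : Set (E n)) (A : (E n → E 3) → E n → ℝ) : Prop :=
  ∀ (u : ℕ → E n → E 3) (ul : E n → E 3), WeakL2 Ω u ul →
    LinfTendsto Ω (fun k => A (u k)) (A ul)

/-- Assumption (A3): local Lipschitz continuity of `a` from `L²(Ω,ℝ³)` to `L^∞(Ω)`. -/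
def AssumpA3 {n : ℕ} (Ω : Set (E n)) (A : (E n → E 3) → E n → ℝ) : Prop :=
  ∀ R > (0:ℝ), ∃ La > (0:ℝ), ∀ u utl : E n → E 3,
    MemLp u 2 (volume.restrict Ω) → MemLp utl 2 (volume.restrict Ω) →
    l2sq Ω u ≤ R → l2sq Ω utl ≤ R →
    eLpNorm (fun x => A u x - A utl x) ⊤ (volume.restrict Ω) ≤
      ENNReal.ofReal (La * l2dist Ω u utl)

/-- The `n`-dimensional Gaussian kernel with standard deviation `σ`. -/
def gauss {n : ℕ} (σ : ℝ) (x : E n) : ℝ :=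
  (2 * Real.pi * σ^2) ^ (-(n:ℝ)/2) * Real.exp (-‖x‖^2 / (2 * σ^2))

/-- The gradient `D𝒢_σ` of the Gaussian kernel. -/
def dgauss {n : ℕ} (σ : ℝ) (x : E n) : E n := (-(1/σ^2) * gauss σ x) • x

/-- The convolved kernel `𝒢_ρ ∗ D𝒢_σ`. -/
def gaussKer {n : ℕ} (σ ρ : ℝ) (w : E n) : E n :=
  ∫ v : E n, gauss ρ v • dgauss σ (w - v)

/-- The anisotropy operator `a[u](x) = exp(−‖(𝒢_ρ ∗ D𝒢_σ ∗ u)(x)‖₂²/ξ₁) + ξ₂`, where `u` is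
extended by zero outside `Ω`. -/
def Aop {n : ℕ} (Ω : Set (E n)) (σ ρ ξ1 ξ2 : ℝ) (u : E n → E 3) (x : E n) : ℝ :=
  Real.exp (-(∑ i : Fin 3, ∑ j : Fin n,
    (∫ y in Ω, gaussKer σ ρ (x - y) j * u y i)^2) / ξ1) + ξ2


open scoped RealInnerProductSpace

section kernelFacts
variable {n : ℕ} {σ : ℝ}

variable {ρ : ℝ}

lemma const_pos (hσ : 0 < σ) : 0 < (2 * Real.pi * σ^2) ^ (-(n:ℝ)/2) :=
  Real.rpow_pos_of_pos (by positivity) _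

lemma gauss_pos (hσ : 0 < σ) (x : E n) : 0 < gauss σ x :=
  mul_pos (const_pos hσ) (Real.exp_pos _)

lemma gauss_le (hσ : 0 < σ) (x : E n) : gauss σ x ≤ (2 * Real.pi * σ^2) ^ (-(n:ℝ)/2) := by
  have h : Real.exp (-‖x‖^2 / (2 * σ^2)) ≤ 1 := by
    rw [Real.exp_le_one_iff]
    have : (0:ℝ) ≤ ‖x‖^2 := sq_nonneg _
    have h2 : (0:ℝ) < 2 * σ^2 := by positivity
    rw [div_nonpos_iff]; right; constructor <;> nlinarith
  calc gauss σ x ≤ (2 * Real.pi * σ^2) ^ (-(n:ℝ)/2) * 1 :=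
        mul_le_mul_of_nonneg_left h (const_pos hσ).le
    _ = _ := mul_one _

lemma gauss_continuous : Continuous (gauss (n := n) σ) := by
  unfold gauss
  fun_prop

lemma dgauss_continuous : Continuous (dgauss (n := n) σ) := by
  unfold dgauss
  exact ((continuous_const.mul gauss_continuous)).smul continuous_id

lemma gauss_mul_norm_le (hσ : 0 < σ) (x : E n) :
    gauss σ x * ‖x‖ ≤ (2 * Real.pi * σ^2) ^ (-(n:ℝ)/2) * σ := by
  set c := (2 * Real.pi * σ^2) ^ (-(n:ℝ)/2) with hc
  have hcpos := const_pos (n := n) hσ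
  rw [← hc] at hcpos
  have ht : (0:ℝ) ≤ ‖x‖ := norm_nonneg _
  have key : Real.exp (-‖x‖^2 / (2 * σ^2)) * ‖x‖ ≤ σ := by
    have h1 : (1:ℝ) + ‖x‖^2/(2*σ^2) ≤ Real.exp (‖x‖^2/(2*σ^2)) := by
      have := Real.add_one_le_exp (‖x‖^2/(2*σ^2)); linarith
    have h2 : Real.exp (-‖x‖^2 / (2 * σ^2)) = (Real.exp (‖x‖^2/(2*σ^2)))⁻¹ := by
      rw [← Real.exp_neg]; ring_nf
    rw [h2, inv_mul_le_iff₀ (Real.exp_pos _)]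
    have h3 : (0:ℝ) < 2*σ^2 := by positivity
    have h1' : 2*σ^2 + ‖x‖^2 ≤ 2*σ^2 * Real.exp (‖x‖^2/(2*σ^2)) := by
      have h4 := mul_le_mul_of_nonneg_left h1 (le_of_lt h3)
      calc 2*σ^2 + ‖x‖^2 = 2*σ^2 * (1 + ‖x‖^2/(2*σ^2)) := by field_simp
        _ ≤ _ := h4
    nlinarith [sq_nonneg (‖x‖ - σ), hσ]
  calc gauss σ x * ‖x‖ = c * (Real.exp (-‖x‖^2 / (2 * σ^2)) * ‖x‖) := by
        unfold gauss; rw [← hc]; ring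
    _ ≤ c * σ := mul_le_mul_of_nonneg_left key hcpos.le

lemma dgauss_norm_le (hσ : 0 < σ) (x : E n) :
    ‖dgauss σ x‖ ≤ (2 * Real.pi * σ^2) ^ (-(n:ℝ)/2) / σ := by
  unfold dgauss
  rw [norm_smul]
  have : ‖-(1/σ^2) * gauss σ x‖ = (1/σ^2) * gauss σ x := by
    rw [norm_mul, Real.norm_eq_abs, Real.norm_eq_abs, abs_neg, abs_of_nonneg (by positivity),
      abs_of_nonneg (gauss_pos hσ x).le]
  rw [this, mul_assoc]
  have hb := gauss_mul_norm_le (n := n) hσ x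
  calc 1/σ^2 * (gauss σ x * ‖x‖) ≤ 1/σ^2 * ((2 * Real.pi * σ^2) ^ (-(n:ℝ)/2) * σ) := by
        apply mul_le_mul_of_nonneg_left hb (by positivity)
    _ = (2 * Real.pi * σ^2) ^ (-(n:ℝ)/2) / σ := by field_simp


lemma normsq_hasFDerivAt (x : E n) :
    HasFDerivAt (fun t : E n => ‖t‖^2) ((2:ℝ) • innerSL ℝ x) x := by
  have h := (hasFDerivAt_id x).inner ℝ (hasFDerivAt_id x)
  simp only [id_eq] at h
  have hfun : (fun t : E n => ⟪t, t⟫) = fun t => ‖t‖^2 := by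
    funext t; exact real_inner_self_eq_norm_sq t
  rw [hfun] at h
  refine h.congr_fderiv (Eq.symm ?_)
  ext h'
  simp only [ContinuousLinearMap.smul_apply, innerSL_apply_apply, ContinuousLinearMap.coe_comp',
    Function.comp_apply, ContinuousLinearMap.prod_apply, ContinuousLinearMap.coe_id', id_eq,
    fderivInnerCLM_apply, smul_eq_mul]
  rw [real_inner_comm]
  ring

lemma gauss_hasFDerivAt (hσ : 0 < σ) (x : E n) :
    HasFDerivAt (gauss (n := n) σ) ((-(gauss σ x / σ^2)) • innerSL ℝ x) x := by
  have hq : HasFDerivAt (fun t : E n => -‖t‖^2 / (2*σ^2))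
      ((-(1/σ^2)) • innerSL ℝ x) x := by
    have h := (normsq_hasFDerivAt x).const_mul (-(1/σ^2)/2)
    have hfun : (fun t : E n => -(1/σ^2)/2 * ‖t‖^2) = fun t => -‖t‖^2 / (2*σ^2) := by
      funext t; ring
    rw [hfun] at h
    refine h.congr_fderiv (Eq.symm ?_)
    rw [smul_smul]; congr 1; ring
  have h2 := hq.exp.const_mul ((2 * Real.pi * σ^2) ^ (-(n:ℝ)/2))
  have hfun : (fun t : E n => (2 * Real.pi * σ^2) ^ (-(n:ℝ)/2) * Real.exp (-‖t‖^2 / (2*σ^2)))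
      = gauss (n := n) σ := rfl
  rw [hfun, smul_smul, smul_smul] at h2
  refine h2.congr_fderiv (Eq.symm ?_)
  congr 1
  unfold gauss
  ring

lemma dgauss_hasFDerivAt (hσ : 0 < σ) (x : E n) :
    HasFDerivAt (dgauss (n := n) σ)
      ((-(1/σ^2) * gauss σ x) • ContinuousLinearMap.id ℝ (E n)
        + ((gauss σ x / σ^4) • innerSL ℝ x).smulRight x) x := by
  have hc : HasFDerivAt (fun t : E n => -(1/σ^2) * gauss σ t)
      ((gauss σ x / σ^4) • innerSL ℝ x) x := by
    have h := (gauss_hasFDerivAt hσ x).const_mul (-(1/σ^2))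
    refine h.congr_fderiv (Eq.symm ?_)
    rw [smul_smul]
    congr 1
    ring
  exact hc.smul (hasFDerivAt_id x)

lemma gauss_mul_normsq_le (hσ : 0 < σ) (x : E n) :
    gauss σ x * ‖x‖^2 ≤ (2 * Real.pi * σ^2) ^ (-(n:ℝ)/2) * (2*σ^2) := by
  set c := (2 * Real.pi * σ^2) ^ (-(n:ℝ)/2) with hc
  have hcpos : 0 < c := Real.rpow_pos_of_pos (by positivity) _
  have h3 : (0:ℝ) < 2*σ^2 := by positivity
  have key : Real.exp (-‖x‖^2 / (2 * σ^2)) * ‖x‖^2 ≤ 2*σ^2 := by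
    have h1 := Real.add_one_le_exp (‖x‖^2/(2*σ^2))
    have h2 : Real.exp (-‖x‖^2 / (2 * σ^2)) = (Real.exp (‖x‖^2/(2*σ^2)))⁻¹ := by
      rw [← Real.exp_neg]; ring_nf
    rw [h2, inv_mul_le_iff₀ (Real.exp_pos _)]
    have h1' : 2*σ^2 + ‖x‖^2 ≤ 2*σ^2 * Real.exp (‖x‖^2/(2*σ^2)) := by
      have h4 := mul_le_mul_of_nonneg_left h1 (le_of_lt h3)
      calc 2*σ^2 + ‖x‖^2 = 2*σ^2 * (‖x‖^2/(2*σ^2) + 1) := by field_simp; ring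
        _ ≤ _ := h4
    nlinarith [sq_nonneg (‖x‖)]
  calc gauss σ x * ‖x‖^2 = c * (Real.exp (-‖x‖^2 / (2 * σ^2)) * ‖x‖^2) := by
        unfold gauss; rw [← hc]; ring
    _ ≤ c * (2*σ^2) := mul_le_mul_of_nonneg_left key hcpos.le

lemma dgauss_lip (hσ : 0 < σ) (x y : E n) :
    ‖dgauss σ x - dgauss σ y‖ ≤ (3 * (2 * Real.pi * σ^2) ^ (-(n:ℝ)/2) / σ^2) * ‖x - y‖ := by
  set c := (2 * Real.pi * σ^2) ^ (-(n:ℝ)/2) with hc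
  have hcpos : 0 < c := Real.rpow_pos_of_pos (by positivity) _
  have bound : ∀ z : E n,
      ‖((-(1/σ^2) * gauss σ z) • ContinuousLinearMap.id ℝ (E n)
        + ((gauss σ z / σ^4) • innerSL ℝ z).smulRight z)‖ ≤ 3 * c / σ^2 := by
    intro z
    apply ContinuousLinearMap.opNorm_le_bound _ (by positivity)
    intro h
    have hgz : 0 < gauss σ z := by unfold gauss; positivity
    have hb1 : gauss σ z ≤ c := by
      have hle : Real.exp (-‖z‖^2 / (2 * σ^2)) ≤ 1 := by
        rw [Real.exp_le_one_iff, div_nonpos_iff]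
        right; constructor <;> nlinarith [sq_nonneg ‖z‖]
      calc gauss σ z ≤ c * 1 := by
            unfold gauss; rw [← hc]; exact mul_le_mul_of_nonneg_left hle hcpos.le
        _ = c := mul_one c
    have hb2 := gauss_mul_normsq_le (n := n) hσ z
    rw [← hc] at hb2
    calc ‖((-(1/σ^2) * gauss σ z) • ContinuousLinearMap.id ℝ (E n)
          + ((gauss σ z / σ^4) • innerSL ℝ z).smulRight z) h‖
        ≤ ‖((-(1/σ^2) * gauss σ z) • ContinuousLinearMap.id ℝ (E n)) h‖
          + ‖(((gauss σ z / σ^4) • innerSL ℝ z).smulRight z) h‖ := by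
          rw [ContinuousLinearMap.add_apply]; exact norm_add_le _ _
      _ ≤ (1/σ^2) * gauss σ z * ‖h‖ + gauss σ z / σ^4 * (‖z‖ * ‖h‖) * ‖z‖ := by
          gcongr
          · rw [ContinuousLinearMap.smul_apply, norm_smul, ContinuousLinearMap.coe_id', id_eq]
            rw [norm_mul, Real.norm_eq_abs, Real.norm_eq_abs, abs_neg,
              abs_of_nonneg (by positivity : (0:ℝ) ≤ 1/σ^2), abs_of_nonneg hgz.le]
          · rw [ContinuousLinearMap.smulRight_apply, norm_smul, ContinuousLinearMap.smul_apply,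
              innerSL_apply_apply]
            rw [norm_smul, Real.norm_eq_abs, abs_of_nonneg (by positivity : (0:ℝ) ≤ gauss σ z/σ^4)]
            rw [Real.norm_eq_abs]
            gcongr
            exact abs_real_inner_le_norm z h
      _ ≤ (1/σ^2) * c * ‖h‖ + (c * (2*σ^2)) / σ^4 * ‖h‖ := by
          have hn : (0:ℝ) ≤ ‖h‖ := norm_nonneg _
          have t1 : (1/σ^2) * gauss σ z * ‖h‖ ≤ (1/σ^2) * c * ‖h‖ := by
            gcongr
          have t2 : gauss σ z / σ^4 * (‖z‖ * ‖h‖) * ‖z‖ ≤ (c * (2*σ^2)) / σ^4 * ‖h‖ := by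
            have : gauss σ z / σ^4 * (‖z‖ * ‖h‖) * ‖z‖ = (gauss σ z * ‖z‖^2) / σ^4 * ‖h‖ := by ring
            rw [this]
            gcongr
          linarith
      _ = 3 * c / σ^2 * ‖h‖ := by field_simp; ring
  have := Convex.norm_image_sub_le_of_norm_hasFDerivWithin_le
    (f := dgauss (n := n) σ)
    (f' := fun z => ((-(1/σ^2) * gauss σ z) • ContinuousLinearMap.id ℝ (E n)
        + ((gauss σ z / σ^4) • innerSL ℝ z).smulRight z))
    (s := univ) (fun z _ => (dgauss_hasFDerivAt hσ z).hasFDerivWithinAt)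
    (fun z _ => bound z) convex_univ (mem_univ y) (mem_univ x)
  exact this


lemma gauss_integrable (hρ : 0 < ρ) : Integrable (gauss (n := n) ρ) := by
  have h := GaussianFourier.integrable_cexp_neg_mul_sq_norm_add
    (V := E n) (b := ((1/(2*ρ^2) : ℝ) : ℂ)) (by rw [Complex.ofReal_re]; positivity) 0 0
  have h2 : Integrable (fun v : E n => Real.exp (-(1/(2*ρ^2)) * ‖v‖^2)) := by
    have hn := h.norm
    convert hn using 2 with v
    rw [show (-((1/(2*ρ^2):ℝ):ℂ) * (‖v‖:ℂ)^2 + 0 * ((inner ℝ (0:E n) v : ℝ):ℂ))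
        = ((-(1/(2*ρ^2)) * ‖v‖^2 : ℝ) : ℂ) by push_cast; ring]
    rw [Complex.norm_exp, Complex.ofReal_re]
  have := h2.const_mul ((2 * Real.pi * ρ^2) ^ (-(n:ℝ)/2))
  apply this.congr
  filter_upwards with v
  unfold gauss
  congr 1
  ring

lemma ker_integrand_integrable (hσ : 0 < σ) (hρ : 0 < ρ) (w : E n) :
    Integrable (fun v : E n => gauss ρ v • dgauss σ (w - v)) := by
  apply Integrable.mono' ((gauss_integrable (n := n) hρ).const_mul
    ((2 * Real.pi * σ^2) ^ (-(n:ℝ)/2) / σ))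
  · exact (gauss_continuous.smul (dgauss_continuous.comp
      (continuous_const.sub continuous_id))).aestronglyMeasurable
  · filter_upwards with v
    rw [norm_smul, Real.norm_eq_abs, abs_of_nonneg (by unfold gauss; positivity)]
    rw [mul_comm ((2 * Real.pi * σ^2) ^ (-(n:ℝ)/2) / σ)]
    exact mul_le_mul_of_nonneg_left (dgauss_norm_le hσ _) (by unfold gauss; positivity)

lemma gaussKer_norm_le (hσ : 0 < σ) (hρ : 0 < ρ) (w : E n) :
    ‖gaussKer σ ρ w‖ ≤ (∫ v : E n, gauss ρ v) * ((2 * Real.pi * σ^2) ^ (-(n:ℝ)/2) / σ) := by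
  unfold gaussKer
  calc ‖∫ v : E n, gauss ρ v • dgauss σ (w - v)‖
      ≤ ∫ v : E n, ‖gauss ρ v • dgauss σ (w - v)‖ := norm_integral_le_integral_norm _
    _ ≤ ∫ v : E n, gauss ρ v * ((2 * Real.pi * σ^2) ^ (-(n:ℝ)/2) / σ) := by
        apply integral_mono (ker_integrand_integrable hσ hρ w).norm
          ((gauss_integrable hρ).mul_const _)
        intro v
        dsimp only
        rw [norm_smul, Real.norm_eq_abs, abs_of_nonneg (by unfold gauss; positivity)]
        exact mul_le_mul_of_nonneg_left (dgauss_norm_le hσ _) (by unfold gauss; positivity)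
    _ = _ := by rw [integral_mul_const]

lemma gaussKer_lip (hσ : 0 < σ) (hρ : 0 < ρ) (w w' : E n) :
    ‖gaussKer σ ρ w - gaussKer σ ρ w'‖ ≤
      (∫ v : E n, gauss ρ v) * (3 * (2 * Real.pi * σ^2) ^ (-(n:ℝ)/2) / σ^2) * ‖w - w'‖ := by
  unfold gaussKer
  rw [← integral_sub (ker_integrand_integrable hσ hρ w) (ker_integrand_integrable hσ hρ w')]
  calc ‖∫ v : E n, (gauss ρ v • dgauss σ (w - v) - gauss ρ v • dgauss σ (w' - v))‖
      ≤ ∫ v : E n, ‖gauss ρ v • dgauss σ (w - v) - gauss ρ v • dgauss σ (w' - v)‖ :=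
        norm_integral_le_integral_norm _
    _ ≤ ∫ v : E n, gauss ρ v * ((3 * (2 * Real.pi * σ^2) ^ (-(n:ℝ)/2) / σ^2) * ‖w - w'‖) := by
        apply integral_mono ((ker_integrand_integrable hσ hρ w).sub
          (ker_integrand_integrable hσ hρ w')).norm ((gauss_integrable hρ).mul_const _)
        intro v
        simp only [Pi.sub_apply]
        rw [← smul_sub, norm_smul, Real.norm_eq_abs, abs_of_nonneg (by unfold gauss; positivity)]
        apply mul_le_mul_of_nonneg_left _ (by unfold gauss; positivity)
        have := dgauss_lip (n := n) hσ (w - v) (w' - v)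
        calc ‖dgauss σ (w - v) - dgauss σ (w' - v)‖
            ≤ 3 * (2 * Real.pi * σ^2) ^ (-(n:ℝ)/2) / σ^2 * ‖(w - v) - (w' - v)‖ := this
          _ = 3 * (2 * Real.pi * σ^2) ^ (-(n:ℝ)/2) / σ^2 * ‖w - w'‖ := by
              congr 1; congr 1; abel
    _ = _ := by rw [integral_mul_const, ← mul_assoc]

end kernelFacts

-- generic helpers
section generic
variable {α : Type*} [MeasurableSpace α] {μ : Measure α} [IsFiniteMeasure μ]

lemma toLp2_inner {f g : α → ℝ} (hf : MemLp f 2 μ) (hg : MemLp g 2 μ) :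
    (inner ℝ (hf.toLp f) (hg.toLp g) : ℝ) = ∫ y, f y * g y ∂μ := by
  rw [L2.inner_def]
  apply integral_congr_ae
  filter_upwards [hf.coeFn_toLp, hg.coeFn_toLp] with y h1 h2
  rw [h1, h2, RCLike.inner_apply, starRingEnd_apply, star_trivial, mul_comm]

lemma toLp2_inner' {f : α → ℝ} (hf : MemLp f 2 μ) (φ : Lp ℝ 2 μ) :
    (inner ℝ (hf.toLp f) φ : ℝ) = ∫ y, f y * (φ : α → ℝ) y ∂μ := by
  rw [L2.inner_def]
  apply integral_congr_ae
  filter_upwards [hf.coeFn_toLp] with y h1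
  rw [h1, RCLike.inner_apply, starRingEnd_apply, star_trivial, mul_comm]

lemma toLp2_norm_le {f : α → ℝ} (hf : MemLp f 2 μ) {C : ℝ} (hC : 0 ≤ C)
    (h : ∀ y, |f y| ≤ C) : ‖hf.toLp f‖ ≤ Real.sqrt (μ univ).toReal * C := by
  rw [MeasureTheory.Lp.norm_toLp]
  have h1 : eLpNorm f 2 μ ≤ μ univ ^ (2:ℝ)⁻¹ * ENNReal.ofReal C := by
    have := eLpNorm_le_of_ae_bound (μ := μ) (p := 2) (f := f)
      (Filter.Eventually.of_forall (fun y => by rw [Real.norm_eq_abs]; exact h y))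
    simpa using this
  have hfin : μ univ ^ (2:ℝ)⁻¹ * ENNReal.ofReal C ≠ ∞ := by
    apply ENNReal.mul_ne_top _ ENNReal.ofReal_ne_top
    exact (ENNReal.rpow_lt_top_of_nonneg (by norm_num) (measure_ne_top μ univ)).ne
  calc (eLpNorm f 2 μ).toReal ≤ (μ univ ^ (2:ℝ)⁻¹ * ENNReal.ofReal C).toReal :=
        ENNReal.toReal_mono hfin h1
    _ = (μ univ).toReal ^ (2:ℝ)⁻¹ * C := by
        rw [ENNReal.toReal_mul, ENNReal.toReal_ofReal hC, ← ENNReal.toReal_rpow]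
    _ = Real.sqrt (μ univ).toReal * C := by
        rw [Real.sqrt_eq_rpow]; norm_num

lemma weak_unif_small {H : Type*} [NormedAddCommGroup H] [InnerProductSpace ℝ H]
    [CompleteSpace H] {V : ℕ → H} {C : ℝ}
    (hC : ∀ k, ‖V k‖ ≤ C)
    (hconv : ∀ φ : H, Tendsto (fun k => (inner ℝ (V k) (φ) : ℝ)) atTop (𝓝 0))
    {S : Set H} (hS : IsCompact S) {δ : ℝ} (hδ : 0 < δ) :
    ∀ᶠ k in atTop, ∀ φ ∈ S, |(inner ℝ (V k) (φ) : ℝ)| ≤ δ := by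
  set r := δ / (2 * (|C| + 1)) with hr
  have hrpos : 0 < r := by positivity
  have hcover : S ⊆ ⋃ φ₀ ∈ S, Metric.ball φ₀ r := fun φ hφ =>
    Set.mem_biUnion hφ (Metric.mem_ball_self hrpos)
  obtain ⟨t, hts, htfin, hcov⟩ := hS.elim_finite_subcover_image
    (fun φ₀ _ => Metric.isOpen_ball) hcover
  have hev : ∀ᶠ k in atTop, ∀ φ₀ ∈ t, |(inner ℝ (V k) (φ₀) : ℝ)| ≤ δ/2 := by
    rw [eventually_all_finite htfin]
    intro φ₀ _
    have h2 : Tendsto (fun k => |(inner ℝ (V k) (φ₀) : ℝ)|) atTop (𝓝 0) := by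
      have := (hconv φ₀).abs; rwa [abs_zero] at this
    exact h2.eventually_le_const (by linarith)
  filter_upwards [hev] with k hk φ hφ
  obtain ⟨φ₀, hφ₀t, hball⟩ := Set.mem_iUnion₂.1 (hcov hφ)
  have hd : ‖φ - φ₀‖ ≤ r := by
    rw [← dist_eq_norm]; exact (Metric.mem_ball.1 hball).le
  have key : |(inner ℝ (V k) (φ - φ₀) : ℝ)| ≤ |C| * r := by
    calc |(inner ℝ (V k) (φ - φ₀) : ℝ)| ≤ ‖V k‖ * ‖φ - φ₀‖ := abs_real_inner_le_norm _ _
      _ ≤ |C| * r := by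
          apply mul_le_mul ((hC k).trans (le_abs_self C)) hd (norm_nonneg _) (abs_nonneg _)
  have hsplit : (inner ℝ (V k) (φ) : ℝ) = (inner ℝ (V k) (φ₀) : ℝ) + (inner ℝ (V k) (φ - φ₀) : ℝ) := by
    rw [← inner_add_right]; congr 1; abel
  have hCr : |C| * r ≤ δ/2 := by
    calc |C| * r ≤ (|C|+1) * r := by gcongr; linarith
      _ = δ/2 := by rw [hr]; field_simp
  calc |(inner ℝ (V k) (φ) : ℝ)| ≤ |(inner ℝ (V k) (φ₀) : ℝ)| + |(inner ℝ (V k) (φ - φ₀) : ℝ)| := by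
        rw [hsplit]; exact abs_add_le _ _
    _ ≤ δ/2 + |C| * r := add_le_add (hk φ₀ hφ₀t) key
    _ ≤ δ := by linarith

lemma exp_neg_abs_diff {a b : ℝ} (ha : 0 ≤ a) (hb : 0 ≤ b) :
    |Real.exp (-a) - Real.exp (-b)| ≤ |a - b| := by
  have key : ∀ s t : ℝ, 0 ≤ s → s ≤ t → Real.exp (-s) - Real.exp (-t) ≤ t - s := by
    intro s t hs hst
    have h1 := Real.add_one_le_exp (-(t - s))
    have h2 : Real.exp (-s) ≤ 1 := Real.exp_le_one_iff.2 (by linarith)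
    have h3 : Real.exp (-t) = Real.exp (-s) * Real.exp (-(t - s)) := by
      rw [← Real.exp_add]; ring_nf
    nlinarith [Real.exp_pos (-s), Real.exp_pos (-(t-s))]
  rcases le_total a b with h | h
  · rw [abs_of_nonneg (by have := Real.exp_le_exp.2 (neg_le_neg h); linarith),
      abs_of_nonpos (by linarith)]
    have := key a b ha h; linarith
  · rw [abs_of_nonpos (by have := Real.exp_le_exp.2 (neg_le_neg h); linarith),
      abs_of_nonneg (by linarith)]
    have := key b a hb h; linarith

lemma abs_apply_le_norm {d : ℕ} (v : EuclideanSpace ℝ (Fin d)) (i : Fin d) :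
    |v i| ≤ ‖v‖ := by
  rw [EuclideanSpace.norm_eq]
  rw [← Real.sqrt_sq_eq_abs]
  apply Real.sqrt_le_sqrt
  calc (v i)^2 = ‖v i‖^2 := by rw [Real.norm_eq_abs, sq_abs]
    _ ≤ ∑ j, ‖v j‖^2 := Finset.single_le_sum (f := fun j => ‖v j‖^2) (fun j _ => by positivity) (Finset.mem_univ i)

end generic


section mainMachinery

variable {n : ℕ} {σ ρ : ℝ} {Ω : Set (E n)}

/-- The paired integral appearing in `Aop`. -/
def Tint (Ω : Set (E n)) (σ ρ : ℝ) (u : E n → E 3) (x : E n) (i : Fin 3) (j : Fin n) : ℝ :=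
  ∫ y in Ω, gaussKer σ ρ (x - y) j * u y i

lemma Aop_eq (ξ1 ξ2 : ℝ) (u : E n → E 3) (x : E n) :
    Aop Ω σ ρ ξ1 ξ2 u x
      = Real.exp (-(∑ i, ∑ j, (Tint Ω σ ρ u x i j)^2)/ξ1) + ξ2 := rfl

/-- Kernel sup bound constant. -/
def KC (n : ℕ) (σ ρ : ℝ) : ℝ :=
  (∫ v : E n, gauss ρ v) * ((2 * Real.pi * σ^2) ^ (-(n:ℝ)/2) / σ)

/-- Kernel Lipschitz constant. -/
def KL (n : ℕ) (σ ρ : ℝ) : ℝ :=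
  (∫ v : E n, gauss ρ v) * (3 * (2 * Real.pi * σ^2) ^ (-(n:ℝ)/2) / σ^2)

lemma intgauss_nonneg : 0 ≤ ∫ v : E n, gauss ρ v :=
  integral_nonneg (fun v => by unfold gauss; positivity)

lemma KC_nonneg (hσ : 0 < σ) : 0 ≤ KC n σ ρ :=
  mul_nonneg intgauss_nonneg (by positivity)

lemma KL_nonneg (hσ : 0 < σ) : 0 ≤ KL n σ ρ :=
  mul_nonneg intgauss_nonneg (by positivity)

lemma gaussKer_cont (hσ : 0 < σ) (hρ : 0 < ρ) : Continuous (gaussKer (n := n) σ ρ) := by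
  have h : LipschitzWith (Real.toNNReal (KL n σ ρ)) (gaussKer (n := n) σ ρ) := by
    apply LipschitzWith.of_dist_le_mul
    intro w w'
    rw [dist_eq_norm, dist_eq_norm, Real.coe_toNNReal _ (KL_nonneg hσ)]
    exact gaussKer_lip hσ hρ w w'
  exact h.continuous

lemma finres (hΩbdd : Bornology.IsBounded Ω) : IsFiniteMeasure (volume.restrict Ω) :=
  ⟨by rw [Measure.restrict_apply_univ]; exact hΩbdd.measure_lt_top⟩

lemma kerComp_abs_le (hσ : 0 < σ) (hρ : 0 < ρ) (w : E n) (j : Fin n) :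
    |gaussKer σ ρ w j| ≤ KC n σ ρ :=
  (abs_apply_le_norm _ j).trans (gaussKer_norm_le hσ hρ w)

lemma kerComp_lip (hσ : 0 < σ) (hρ : 0 < ρ) (x x' y : E n) (j : Fin n) :
    |gaussKer σ ρ (x - y) j - gaussKer σ ρ (x' - y) j| ≤ KL n σ ρ * ‖x - x'‖ := by
  have h1 : |gaussKer σ ρ (x - y) j - gaussKer σ ρ (x' - y) j|
      ≤ ‖gaussKer σ ρ (x - y) - gaussKer σ ρ (x' - y)‖ := by
    have := abs_apply_le_norm (gaussKer σ ρ (x - y) - gaussKer σ ρ (x' - y)) j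
    simpa using this
  refine h1.trans ?_
  have h2 := gaussKer_lip (n := n) hσ hρ (x - y) (x' - y)
  calc ‖gaussKer σ ρ (x - y) - gaussKer σ ρ (x' - y)‖
      ≤ KL n σ ρ * ‖(x - y) - (x' - y)‖ := h2
    _ = KL n σ ρ * ‖x - x'‖ := by congr 2; abel

lemma Gmem (hσ : 0 < σ) (hρ : 0 < ρ) (hΩbdd : Bornology.IsBounded Ω) (x : E n) (j : Fin n) :
    MemLp (fun y => gaussKer σ ρ (x - y) j) 2 (volume.restrict Ω) := by
  haveI := finres hΩbdd
  apply MemLp.of_bound _ (KC n σ ρ)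
    (Filter.Eventually.of_forall (fun y => by
      rw [Real.norm_eq_abs]; exact kerComp_abs_le hσ hρ (x - y) j))
  exact (((EuclideanSpace.proj j).continuous.comp
    ((gaussKer_cont hσ hρ).comp (continuous_const.sub continuous_id)))).aestronglyMeasurable

lemma Umem {u : E n → E 3} (hu : MemLp u 2 (volume.restrict Ω)) (i : Fin 3) :
    MemLp (fun y => u y i) 2 (volume.restrict Ω) :=
  (EuclideanSpace.proj (𝕜 := ℝ) i).comp_memLp' hu

def Glp (hσ : 0 < σ) (hρ : 0 < ρ) (hΩbdd : Bornology.IsBounded Ω) (x : E n) (j : Fin n) :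
    Lp ℝ 2 (volume.restrict Ω) := (Gmem hσ hρ hΩbdd x j).toLp _

def Ulp {u : E n → E 3} (hu : MemLp u 2 (volume.restrict Ω)) (i : Fin 3) :
    Lp ℝ 2 (volume.restrict Ω) := (Umem hu i).toLp _

/-- `√(vol Ω)`. -/
def SB (Ω : Set (E n)) : ℝ := Real.sqrt ((volume Ω).toReal)

lemma SB_nonneg : 0 ≤ SB Ω := Real.sqrt_nonneg _

lemma Glp_norm_le (hσ : 0 < σ) (hρ : 0 < ρ) (hΩbdd : Bornology.IsBounded Ω)
    (x : E n) (j : Fin n) :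
    ‖(Gmem hσ hρ hΩbdd x j).toLp _‖ ≤ SB Ω * KC n σ ρ := by
  haveI := finres hΩbdd
  have := toLp2_norm_le (Gmem hσ hρ hΩbdd x j) (KC_nonneg hσ)
    (fun y => kerComp_abs_le hσ hρ (x - y) j)
  rwa [Measure.restrict_apply_univ] at this

lemma Glp_lip (hσ : 0 < σ) (hρ : 0 < ρ) (hΩbdd : Bornology.IsBounded Ω)
    (x x' : E n) (j : Fin n) :
    ‖(Gmem hσ hρ hΩbdd x j).toLp _ - (Gmem hσ hρ hΩbdd x' j).toLp _‖
      ≤ SB Ω * KL n σ ρ * ‖x - x'‖ := by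
  haveI := finres hΩbdd
  rw [← MemLp.toLp_sub]
  have hb : ∀ y : E n, |gaussKer σ ρ (x - y) j - gaussKer σ ρ (x' - y) j|
      ≤ KL n σ ρ * ‖x - x'‖ := fun y => kerComp_lip hσ hρ x x' y j
  have := toLp2_norm_le ((Gmem hσ hρ hΩbdd x j).sub (Gmem hσ hρ hΩbdd x' j))
    (mul_nonneg (KL_nonneg hσ) (norm_nonneg _)) (fun y => hb y)
  rw [Measure.restrict_apply_univ] at this
  calc ‖((Gmem hσ hρ hΩbdd x j).sub (Gmem hσ hρ hΩbdd x' j)).toLp _‖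
      ≤ SB Ω * (KL n σ ρ * ‖x - x'‖) := this
    _ = SB Ω * KL n σ ρ * ‖x - x'‖ := by ring

lemma Tint_eq_inner (hσ : 0 < σ) (hρ : 0 < ρ) (hΩbdd : Bornology.IsBounded Ω)
    {u : E n → E 3} (hu : MemLp u 2 (volume.restrict Ω)) (x : E n) (i : Fin 3) (j : Fin n) :
    Tint Ω σ ρ u x i j
      = (inner ℝ ((Gmem hσ hρ hΩbdd x j).toLp _) ((Umem hu i).toLp _) : ℝ) := by
  haveI := finres hΩbdd
  rw [toLp2_inner]
  rfl

lemma Ulp_norm_le (hΩbdd : Bornology.IsBounded Ω)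
    {u : E n → E 3} (hu : MemLp u 2 (volume.restrict Ω)) (i : Fin 3) :
    ‖(Umem hu i).toLp _‖ ≤ Real.sqrt (∫ y in Ω, ‖u y‖^2) := by
  haveI := finres hΩbdd
  have hsq : ‖(Umem hu i).toLp _‖^2 = ∫ y in Ω, (u y i) * (u y i) := by
    rw [← real_inner_self_eq_norm_sq, toLp2_inner]
  have hint1 : Integrable (fun y => (u y i)^2) (volume.restrict Ω) :=
    (memLp_two_iff_integrable_sq (Umem hu i).aestronglyMeasurable).1 (Umem hu i)
  have hint2 : Integrable (fun y => ‖u y‖^2) (volume.restrict Ω) :=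
    (memLp_two_iff_integrable_sq_norm hu.aestronglyMeasurable).1 hu
  have hle : ‖(Umem hu i).toLp _‖^2 ≤ ∫ y in Ω, ‖u y‖^2 := by
    rw [hsq]
    have hptw : ∀ y : E n, (u y i) * (u y i) ≤ ‖u y‖^2 := fun y => by
      have h := abs_apply_le_norm (u y) i
      calc u y i * u y i = |u y i| * |u y i| := (abs_mul_abs_self _).symm
        _ ≤ ‖u y‖ * ‖u y‖ := mul_le_mul h h (abs_nonneg _) (norm_nonneg _)
        _ = ‖u y‖^2 := (sq (‖u y‖)) ▸ (pow_two (‖u y‖)).symm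
    apply integral_mono (by simpa [pow_two] using hint1) hint2 hptw
  have h0 : ‖(Umem hu i).toLp _‖ = Real.sqrt (‖(Umem hu i).toLp _‖^2) := by
    rw [Real.sqrt_sq (norm_nonneg _)]
  rw [h0]
  exact Real.sqrt_le_sqrt hle

lemma Ulp_sub_norm_le (hΩbdd : Bornology.IsBounded Ω)
    {u u' : E n → E 3} (hu : MemLp u 2 (volume.restrict Ω))
    (hu' : MemLp u' 2 (volume.restrict Ω)) (i : Fin 3) :
    ‖(Umem hu i).toLp _ - (Umem hu' i).toLp _‖ ≤ l2dist Ω u u' := by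
  haveI := finres hΩbdd
  rw [← MemLp.toLp_sub]
  have hsq : ‖((Umem hu i).sub (Umem hu' i)).toLp _‖^2
      = ∫ y in Ω, ((fun y => u y i) - fun y => u' y i) y * ((fun y => u y i) - fun y => u' y i) y := by
    rw [← real_inner_self_eq_norm_sq, toLp2_inner]
  have hint1 : Integrable (fun y => (u y i - u' y i)^2) (volume.restrict Ω) := by
    have h := (memLp_two_iff_integrable_sq ((Umem hu i).sub (Umem hu' i)).aestronglyMeasurable).1
      ((Umem hu i).sub (Umem hu' i))
    simpa [Pi.sub_apply] using h
  have hint2 : Integrable (fun y => ‖u y - u' y‖^2) (volume.restrict Ω) :=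
    (memLp_two_iff_integrable_sq_norm (hu.sub hu').aestronglyMeasurable).1 (hu.sub hu')
  have hle : ‖((Umem hu i).sub (Umem hu' i)).toLp _‖^2 ≤ ∫ y in Ω, ‖u y - u' y‖^2 := by
    rw [hsq]
    apply integral_mono _ hint2 _
    · simpa [pow_two] using hint1
    · intro y
      simp only [Pi.sub_apply]
      have h1 := abs_apply_le_norm (u y - u' y) i
      have h2 : (u y - u' y) i = u y i - u' y i := rfl
      rw [h2] at h1
      calc (u y i - u' y i) * (u y i - u' y i)
          = |u y i - u' y i| * |u y i - u' y i| := (abs_mul_abs_self _).symm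
        _ ≤ ‖u y - u' y‖ * ‖u y - u' y‖ := mul_le_mul h1 h1 (abs_nonneg _) (norm_nonneg _)
        _ = ‖u y - u' y‖^2 := (pow_two (‖u y - u' y‖)).symm
  have h0 : ‖((Umem hu i).sub (Umem hu' i)).toLp _‖
      = Real.sqrt (‖((Umem hu i).sub (Umem hu' i)).toLp _‖^2) := by
    rw [Real.sqrt_sq (norm_nonneg _)]
  rw [h0]
  exact Real.sqrt_le_sqrt hle

lemma Aop_pointwise {ξ1 ξ2 : ℝ} (hξ1 : 0 < ξ1) {u u' : E n → E 3} {x : E n} {B D : ℝ}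
    (hB : 0 ≤ B) (hD : 0 ≤ D)
    (hb : ∀ (i : Fin 3) (j : Fin n), |Tint Ω σ ρ u x i j| ≤ B)
    (hb' : ∀ (i : Fin 3) (j : Fin n), |Tint Ω σ ρ u' x i j| ≤ B)
    (hd : ∀ (i : Fin 3) (j : Fin n), |Tint Ω σ ρ u x i j - Tint Ω σ ρ u' x i j| ≤ D) :
    |Aop Ω σ ρ ξ1 ξ2 u x - Aop Ω σ ρ ξ1 ξ2 u' x| ≤ 3 * n * (2 * B * D) / ξ1 := by
  set S := ∑ i, ∑ j, (Tint Ω σ ρ u x i j)^2 with hS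
  set S' := ∑ i, ∑ j, (Tint Ω σ ρ u' x i j)^2 with hS'
  have hSpos : 0 ≤ S := by rw [hS]; positivity
  have hS'pos : 0 ≤ S' := by rw [hS']; positivity
  have h1 : Aop Ω σ ρ ξ1 ξ2 u x - Aop Ω σ ρ ξ1 ξ2 u' x
      = Real.exp (-(S/ξ1)) - Real.exp (-(S'/ξ1)) := by
    rw [Aop_eq, Aop_eq, ← hS, ← hS']
    have e1 : -S/ξ1 = -(S/ξ1) := by ring
    have e2 : -S'/ξ1 = -(S'/ξ1) := by ring
    rw [e1, e2]; ring
  rw [h1]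
  have h2 := exp_neg_abs_diff (div_nonneg hSpos hξ1.le) (div_nonneg hS'pos hξ1.le)
  refine h2.trans ?_
  have h3 : |S/ξ1 - S'/ξ1| = |S - S'| / ξ1 := by
    rw [div_sub_div_same, abs_div, abs_of_pos hξ1]
  rw [h3]
  gcongr
  have h4 : S - S' = ∑ i : Fin 3, ∑ j : Fin n,
      ((Tint Ω σ ρ u x i j)^2 - (Tint Ω σ ρ u' x i j)^2) := by
    rw [hS, hS', ← Finset.sum_sub_distrib]
    apply Finset.sum_congr rfl
    intro i _
    rw [← Finset.sum_sub_distrib]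
  rw [h4]
  have h5 : ∀ (i : Fin 3) (j : Fin n),
      |(Tint Ω σ ρ u x i j)^2 - (Tint Ω σ ρ u' x i j)^2| ≤ 2 * B * D := by
    intro i j
    rw [sq_sub_sq, abs_mul]
    have ha : |Tint Ω σ ρ u x i j + Tint Ω σ ρ u' x i j| ≤ 2 * B := by
      calc |Tint Ω σ ρ u x i j + Tint Ω σ ρ u' x i j|
          ≤ |Tint Ω σ ρ u x i j| + |Tint Ω σ ρ u' x i j| := abs_add_le _ _
        _ ≤ 2 * B := by have := hb i j; have := hb' i j; linarith
    exact mul_le_mul ha (hd i j) (abs_nonneg _) (by linarith)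
  calc |∑ i : Fin 3, ∑ j : Fin n, ((Tint Ω σ ρ u x i j)^2 - (Tint Ω σ ρ u' x i j)^2)|
      ≤ ∑ i : Fin 3, |∑ j : Fin n, ((Tint Ω σ ρ u x i j)^2 - (Tint Ω σ ρ u' x i j)^2)| :=
        Finset.abs_sum_le_sum_abs _ _
    _ ≤ ∑ _i : Fin 3, ∑ _j : Fin n, (2 * B * D) := by
        apply Finset.sum_le_sum
        intro i _
        refine (Finset.abs_sum_le_sum_abs _ _).trans ?_
        exact Finset.sum_le_sum (fun j _ => h5 i j)
    _ = 3 * n * (2 * B * D) := by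
        simp [Finset.sum_const, Finset.card_univ]
        ring

lemma Glp_norm_le' (hσ : 0 < σ) (hρ : 0 < ρ) (hΩbdd : Bornology.IsBounded Ω)
    (x : E n) (j : Fin n) : ‖Glp hσ hρ hΩbdd x j‖ ≤ SB Ω * KC n σ ρ :=
  Glp_norm_le hσ hρ hΩbdd x j

lemma Glp_lip' (hσ : 0 < σ) (hρ : 0 < ρ) (hΩbdd : Bornology.IsBounded Ω)
    (x x' : E n) (j : Fin n) :
    ‖Glp hσ hρ hΩbdd x j - Glp hσ hρ hΩbdd x' j‖ ≤ SB Ω * KL n σ ρ * ‖x - x'‖ :=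
  Glp_lip hσ hρ hΩbdd x x' j

lemma Tint_eq_inner' (hσ : 0 < σ) (hρ : 0 < ρ) (hΩbdd : Bornology.IsBounded Ω)
    {u : E n → E 3} (hu : MemLp u 2 (volume.restrict Ω)) (x : E n) (i : Fin 3) (j : Fin n) :
    Tint Ω σ ρ u x i j = (inner ℝ (Glp hσ hρ hΩbdd x j) (Ulp hu i) : ℝ) :=
  Tint_eq_inner hσ hρ hΩbdd hu x i j

lemma Ulp_norm_le' (hΩbdd : Bornology.IsBounded Ω)
    {u : E n → E 3} (hu : MemLp u 2 (volume.restrict Ω)) (i : Fin 3) :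
    ‖Ulp hu i‖ ≤ Real.sqrt (∫ y in Ω, ‖u y‖^2) := Ulp_norm_le hΩbdd hu i

lemma Ulp_sub_norm_le' (hΩbdd : Bornology.IsBounded Ω)
    {u u' : E n → E 3} (hu : MemLp u 2 (volume.restrict Ω))
    (hu' : MemLp u' 2 (volume.restrict Ω)) (i : Fin 3) :
    ‖Ulp hu i - Ulp hu' i‖ ≤ l2dist Ω u u' := Ulp_sub_norm_le hΩbdd hu hu' i

end mainMachinery


set_option maxHeartbeats 1000000 in
/-- the concrete anisotropy operator
`a[u] = exp(−‖𝒢_ρ ∗ D𝒢_σ ∗ u‖₂²/ξ₁) + ξ₂` satisfies the assumptions (A1)–(A3):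
uniform bounds `ξ₂ ≤ c_a < a[u](x) < C_a`, weak-`L²`-to-`L^∞` continuity, and local Lipschitz
continuity from `L²(Ω,ℝ³)` to `L^∞(Ω)`. -/
theorem statement11 {n : ℕ} (hn : n = 2 ∨ n = 3) (Ω : Set (E n))
    (hΩopen : IsOpen Ω) (hΩbdd : Bornology.IsBounded Ω)
    (σ ρ ξ1 ξ2 : ℝ) (hσ : 0 < σ) (hρ : 0 < ρ) (hξ1 : 0 < ξ1) (hξ2 : 0 < ξ2) :
    (∃ ca Ca : ℝ, 0 < ca ∧ ca < Ca ∧ ξ2 ≤ ca ∧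
      ∀ u : E n → E 3, MemLp u 2 (volume.restrict Ω) →
        ∀ᵐ x ∂(volume.restrict Ω),
          ca < Aop Ω σ ρ ξ1 ξ2 u x ∧ Aop Ω σ ρ ξ1 ξ2 u x < Ca) ∧
    (∀ (u : ℕ → E n → E 3) (ul : E n → E 3), WeakL2 Ω u ul →
      LinfTendsto Ω (fun k => Aop Ω σ ρ ξ1 ξ2 (u k)) (Aop Ω σ ρ ξ1 ξ2 ul)) ∧
    (∀ R > (0:ℝ), ∃ La > (0:ℝ), ∀ u utl : E n → E 3,
      MemLp u 2 (volume.restrict Ω) → MemLp utl 2 (volume.restrict Ω) →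
      l2sq Ω u ≤ R → l2sq Ω utl ≤ R →
      eLpNorm (fun x => Aop Ω σ ρ ξ1 ξ2 u x - Aop Ω σ ρ ξ1 ξ2 utl x) ⊤
          (volume.restrict Ω) ≤ ENNReal.ofReal (La * l2dist Ω u utl)) := by
  haveI := finres hΩbdd
  have hMG0 : (0:ℝ) ≤ SB Ω * KC n σ ρ := mul_nonneg SB_nonneg (KC_nonneg hσ)
  refine ⟨?_, ?_, ?_⟩
  · -- (A1)
    refine ⟨ξ2, ξ2 + 2, hξ2, by linarith, le_refl _, ?_⟩
    intro u _hu
    apply Filter.Eventually.of_forall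
    intro x
    have hA : Aop Ω σ ρ ξ1 ξ2 u x
        = Real.exp (-(∑ i, ∑ j, (Tint Ω σ ρ u x i j)^2)/ξ1) + ξ2 := rfl
    have hS : (0:ℝ) ≤ ∑ i, ∑ j, (Tint Ω σ ρ u x i j)^2 := by positivity
    have hexp1 : Real.exp (-(∑ i, ∑ j, (Tint Ω σ ρ u x i j)^2)/ξ1) ≤ 1 := by
      rw [Real.exp_le_one_iff]
      apply div_nonpos_of_nonpos_of_nonneg (by linarith) hξ1.le
    have hexp0 := Real.exp_pos (-(∑ i, ∑ j, (Tint Ω σ ρ u x i j)^2)/ξ1)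
    rw [hA]
    constructor <;> linarith
  · -- (A2)
    rintro u ul ⟨hmem, hmemL, hconv⟩
    -- weak convergence of the components, in Lp form
    have hconv' : ∀ (i : Fin 3) (φ : Lp ℝ 2 (volume.restrict Ω)),
        Tendsto (fun k => (inner ℝ (Ulp (hmem k) i - Ulp hmemL i) φ : ℝ))
          atTop (𝓝 0) := by
      intro i φ
      have hgmem : MemLp (fun y => (φ : E n → ℝ) y • EuclideanSpace.single i (1:ℝ)) 2
          (volume.restrict Ω) :=
        ((ContinuousLinearMap.id ℝ ℝ).smulRight
          (EuclideanSpace.single i (1:ℝ))).comp_memLp' (Lp.memLp φ)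
      have key : ∀ (w : E n → E 3) (hwm : MemLp w 2 (volume.restrict Ω)),
          (∫ x in Ω, (inner ℝ (w x) ((φ : E n → ℝ) x • EuclideanSpace.single i (1:ℝ)) : ℝ))
            = (inner ℝ (Ulp hwm i) φ : ℝ) := by
        intro w hwm
        rw [show Ulp hwm i = (Umem hwm i).toLp _ from rfl, toLp2_inner' (Umem hwm i) φ]
        apply integral_congr_ae
        apply Filter.Eventually.of_forall
        intro y
        dsimp only
        rw [real_inner_smul_right, EuclideanSpace.inner_single_right]
        simp [mul_comm]
      have h1 := hconv _ hgmem
      have h2 : Tendsto (fun k => (inner ℝ (Ulp (hmem k) i) φ : ℝ)) atTop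
          (𝓝 (inner ℝ (Ulp hmemL i) φ : ℝ)) := by
        rw [← key ul hmemL]
        exact h1.congr (fun k => key (u k) (hmem k))
      have h3 := h2.sub_const (inner ℝ (Ulp hmemL i) φ : ℝ)
      rw [sub_self] at h3
      apply h3.congr
      intro k
      rw [inner_sub_left]
    -- Banach–Steinhaus bound
    have hBS : ∀ i : Fin 3, ∃ C : ℝ, ∀ k,
        ‖Ulp (hmem k) i - Ulp hmemL i‖ ≤ C := by
      intro i
      have hpt : ∀ φ : Lp ℝ 2 (volume.restrict Ω), ∃ C : ℝ, ∀ k : ℕ,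
          ‖(innerSL ℝ (Ulp (hmem k) i - Ulp hmemL i)) φ‖ ≤ C := by
        intro φ
        have h2 := (hconv' i φ).norm
        obtain ⟨C, hC⟩ := h2.bddAbove_range
        refine ⟨C, fun k => ?_⟩
        exact hC (Set.mem_range_self k)
      obtain ⟨C, hC⟩ := banach_steinhaus hpt
      refine ⟨C, fun k => ?_⟩
      have := hC k
      rwa [innerSL_apply_norm] at this
    choose Cf hCf using hBS
    set C : ℝ := ∑ i : Fin 3, |Cf i| with hCdef
    have hC0 : 0 ≤ C := Finset.sum_nonneg (fun _ _ => abs_nonneg _)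
    have hCbound : ∀ k (i : Fin 3),
        ‖Ulp (hmem k) i - Ulp hmemL i‖ ≤ C := fun k i =>
      (hCf i k).trans ((le_abs_self _).trans
        (Finset.single_le_sum (f := fun i => |Cf i|) (fun _ _ => abs_nonneg _)
          (Finset.mem_univ i)))
    -- compact families of kernels
    have hScomp : ∀ j : Fin n,
        IsCompact ((fun x => Glp hσ hρ hΩbdd x j) '' closure Ω) := by
      intro j
      apply (Metric.isCompact_of_isClosed_isBounded isClosed_closure hΩbdd.closure).image
      have hlip : LipschitzWith (Real.toNNReal (SB Ω * KL n σ ρ))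
          (fun x => Glp hσ hρ hΩbdd x j) := by
        apply LipschitzWith.of_dist_le_mul
        intro x x'
        rw [dist_eq_norm, dist_eq_norm,
          Real.coe_toNNReal _ (mul_nonneg SB_nonneg (KL_nonneg hσ))]
        exact Glp_lip' hσ hρ hΩbdd x x' j
      exact hlip.continuous
    -- norm bound for the limit
    set CU : ℝ := ∑ i : Fin 3, ‖Ulp hmemL i‖ with hCUdef
    have hCU0 : 0 ≤ CU := Finset.sum_nonneg (fun _ _ => norm_nonneg _)
    have hUlbound : ∀ i : Fin 3, ‖Ulp hmemL i‖ ≤ CU := fun i =>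
      Finset.single_le_sum (f := fun i => ‖Ulp hmemL i‖)
        (fun _ _ => norm_nonneg _) (Finset.mem_univ i)
    have hUkbound : ∀ k (i : Fin 3), ‖Ulp (hmem k) i‖ ≤ C + CU := by
      intro k i
      calc ‖Ulp (hmem k) i‖
          = ‖(Ulp (hmem k) i - Ulp hmemL i) + Ulp hmemL i‖ := by
            congr 1; abel
        _ ≤ ‖Ulp (hmem k) i - Ulp hmemL i‖ + ‖Ulp hmemL i‖ :=
            norm_add_le _ _
        _ ≤ C + CU := add_le_add (hCbound k i) (hUlbound i)
    set B : ℝ := SB Ω * KC n σ ρ * (C + CU) with hBdef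
    have hB0 : 0 ≤ B := mul_nonneg hMG0 (by linarith)
    -- conclude
    unfold LinfTendsto
    rw [ENNReal.tendsto_nhds_zero]
    intro ε hε
    obtain ⟨δ, hδ, hδε⟩ : ∃ δ : ℝ, 0 < δ ∧ ENNReal.ofReal δ ≤ ε := by
      rcases eq_or_ne ε ⊤ with h | h
      · exact ⟨1, one_pos, by simp [h]⟩
      · exact ⟨ε.toReal, ENNReal.toReal_pos hε.ne' h, by rw [ENNReal.ofReal_toReal h]⟩
    set a : ℝ := 3 * n * (2 * B) with hadef
    have ha0 : 0 ≤ a := by positivity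
    set δ' : ℝ := δ * ξ1 / (a + ξ1) with hδ'def
    have hδ'0 : 0 < δ' := by positivity
    have hfinal : 3 * n * (2 * B * δ') / ξ1 ≤ δ := by
      have he : 3 * n * (2 * B * δ') / ξ1 = a * δ / (a + ξ1) := by
        rw [hδ'def, hadef]
        field_simp
      rw [he, div_le_iff₀ (by positivity : (0:ℝ) < a + ξ1)]
      nlinarith
    have hsmall : ∀ᶠ k in atTop, ∀ (i : Fin 3) (j : Fin n),
        ∀ φ ∈ ((fun x => Glp hσ hρ hΩbdd x j) '' closure Ω),
          |(inner ℝ (Ulp (hmem k) i - Ulp hmemL i) φ : ℝ)| ≤ δ' := by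
      rw [eventually_all]
      intro i
      rw [eventually_all]
      intro j
      exact weak_unif_small (fun k => hCbound k i) (hconv' i) (hScomp j) hδ'0
    filter_upwards [hsmall] with k hk
    rw [eLpNorm_exponent_top]
    refine le_trans (eLpNormEssSup_le_of_ae_bound (C := δ) ?_) hδε
    filter_upwards [ae_restrict_mem hΩopen.measurableSet] with x hx
    rw [Real.norm_eq_abs]
    have hb : ∀ (i : Fin 3) (j : Fin n), |Tint Ω σ ρ (u k) x i j| ≤ B := by
      intro i j
      rw [Tint_eq_inner' hσ hρ hΩbdd (hmem k) x i j]
      calc |(inner ℝ (Glp hσ hρ hΩbdd x j) (Ulp (hmem k) i) : ℝ)|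
          ≤ ‖Glp hσ hρ hΩbdd x j‖ * ‖Ulp (hmem k) i‖ :=
            abs_real_inner_le_norm _ _
        _ ≤ SB Ω * KC n σ ρ * (C + CU) :=
            mul_le_mul (Glp_norm_le' hσ hρ hΩbdd x j) (hUkbound k i) (norm_nonneg _) hMG0
    have hb' : ∀ (i : Fin 3) (j : Fin n), |Tint Ω σ ρ ul x i j| ≤ B := by
      intro i j
      rw [Tint_eq_inner' hσ hρ hΩbdd hmemL x i j]
      calc |(inner ℝ (Glp hσ hρ hΩbdd x j) (Ulp hmemL i) : ℝ)|
          ≤ ‖Glp hσ hρ hΩbdd x j‖ * ‖Ulp hmemL i‖ :=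
            abs_real_inner_le_norm _ _
        _ ≤ SB Ω * KC n σ ρ * (C + CU) := by
            apply mul_le_mul (Glp_norm_le' hσ hρ hΩbdd x j) _ (norm_nonneg _) hMG0
            exact (hUlbound i).trans (by linarith)
    have hd : ∀ (i : Fin 3) (j : Fin n),
        |Tint Ω σ ρ (u k) x i j - Tint Ω σ ρ ul x i j| ≤ δ' := by
      intro i j
      rw [Tint_eq_inner' hσ hρ hΩbdd (hmem k) x i j, Tint_eq_inner' hσ hρ hΩbdd hmemL x i j,
        ← inner_sub_right]
      rw [real_inner_comm]
      exact hk i j _ ⟨x, subset_closure hx, rfl⟩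
    exact (Aop_pointwise hξ1 hB0 hδ'0.le hb hb' hd).trans hfinal
  · -- (A3)
    intro R hR
    have h2 : 0 ≤ SB Ω * KC n σ ρ * Real.sqrt R := mul_nonneg hMG0 (Real.sqrt_nonneg _)
    have h3 : (0:ℝ) ≤ 3 * n * (2 * (SB Ω * KC n σ ρ * Real.sqrt R) * (SB Ω * KC n σ ρ)) / ξ1 := by
      apply div_nonneg _ hξ1.le
      apply mul_nonneg (by positivity)
      exact mul_nonneg (by linarith) hMG0
    set La : ℝ := 3 * n * (2 * (SB Ω * KC n σ ρ * Real.sqrt R) * (SB Ω * KC n σ ρ)) / ξ1 + 1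
      with hLadef
    refine ⟨La, by rw [hLadef]; linarith, ?_⟩
    intro u utl hu hutl hRu hRutl
    have hld0 : 0 ≤ l2dist Ω u utl := Real.sqrt_nonneg _
    have hptx : ∀ x : E n, |Aop Ω σ ρ ξ1 ξ2 u x - Aop Ω σ ρ ξ1 ξ2 utl x|
        ≤ La * l2dist Ω u utl := by
      intro x
      have hb : ∀ (i : Fin 3) (j : Fin n),
          |Tint Ω σ ρ u x i j| ≤ SB Ω * KC n σ ρ * Real.sqrt R := by
        intro i j
        rw [Tint_eq_inner' hσ hρ hΩbdd hu x i j]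
        calc |(inner ℝ (Glp hσ hρ hΩbdd x j) (Ulp hu i) : ℝ)|
            ≤ ‖Glp hσ hρ hΩbdd x j‖ * ‖Ulp hu i‖ :=
              abs_real_inner_le_norm _ _
          _ ≤ SB Ω * KC n σ ρ * Real.sqrt R := by
              apply mul_le_mul (Glp_norm_le' hσ hρ hΩbdd x j) _ (norm_nonneg _) hMG0
              exact (Ulp_norm_le' hΩbdd hu i).trans (Real.sqrt_le_sqrt hRu)
      have hb' : ∀ (i : Fin 3) (j : Fin n),
          |Tint Ω σ ρ utl x i j| ≤ SB Ω * KC n σ ρ * Real.sqrt R := by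
        intro i j
        rw [Tint_eq_inner' hσ hρ hΩbdd hutl x i j]
        calc |(inner ℝ (Glp hσ hρ hΩbdd x j) (Ulp hutl i) : ℝ)|
            ≤ ‖Glp hσ hρ hΩbdd x j‖ * ‖Ulp hutl i‖ :=
              abs_real_inner_le_norm _ _
          _ ≤ SB Ω * KC n σ ρ * Real.sqrt R := by
              apply mul_le_mul (Glp_norm_le' hσ hρ hΩbdd x j) _ (norm_nonneg _) hMG0
              exact (Ulp_norm_le' hΩbdd hutl i).trans (Real.sqrt_le_sqrt hRutl)
      have hd : ∀ (i : Fin 3) (j : Fin n),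
          |Tint Ω σ ρ u x i j - Tint Ω σ ρ utl x i j|
            ≤ SB Ω * KC n σ ρ * l2dist Ω u utl := by
        intro i j
        rw [Tint_eq_inner' hσ hρ hΩbdd hu x i j, Tint_eq_inner' hσ hρ hΩbdd hutl x i j,
          ← inner_sub_right]
        calc |(inner ℝ (Glp hσ hρ hΩbdd x j)
              (Ulp hu i - Ulp hutl i) : ℝ)|
            ≤ ‖Glp hσ hρ hΩbdd x j‖ * ‖Ulp hu i - Ulp hutl i‖ :=
              abs_real_inner_le_norm _ _
          _ ≤ SB Ω * KC n σ ρ * l2dist Ω u utl :=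
              mul_le_mul (Glp_norm_le' hσ hρ hΩbdd x j) (Ulp_sub_norm_le' hΩbdd hu hutl i)
                (norm_nonneg _) hMG0
      have hmain := Aop_pointwise (ξ2 := ξ2) hξ1 h2 (mul_nonneg hMG0 hld0) hb hb' hd
      refine hmain.trans ?_
      have he : 3 * n * (2 * (SB Ω * KC n σ ρ * Real.sqrt R)
            * (SB Ω * KC n σ ρ * l2dist Ω u utl)) / ξ1
          = (3 * n * (2 * (SB Ω * KC n σ ρ * Real.sqrt R) * (SB Ω * KC n σ ρ)) / ξ1)
            * l2dist Ω u utl := by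
        field_simp
      rw [he, hLadef]
      nlinarith
    rw [eLpNorm_exponent_top]
    apply eLpNormEssSup_le_of_ae_bound (C := La * l2dist Ω u utl)
    apply Filter.Eventually.of_forall
    intro x
    rw [Real.norm_eq_abs]
    exact hptx x


end
end

section
/- Let n ∈ {2,3}, λ, μ > 0 and W(A) = (λ/2)(exp((log det A)²) − 1) + μ|A^sym − 𝟙|² on GL⁺(n). Then W satisfies the growth conditions (W2): there exist constants C_{W,1}, C_{W,2}, r_W > 0 such that W(A) ≥ C_{W,1}|A^sym − 𝟙|² for all A ∈ GL⁺(n) with |A − 𝟙| < r_W, and W(A) ≥ C_{W,2} for all A ∈ GL⁺(n) with |A − 𝟙| ≥ r_W. -/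
open MeasureTheory Filter Topology Matrix Set
open scoped ENNReal

noncomputable section

attribute [local instance] Matrix.frobeniusNormedAddCommGroup Matrix.frobeniusNormedSpace

/-- Matrices with positive determinant, `GL⁺(n)`. -/
def GLplus (n : ℕ) : Set (Matrix (Fin n) (Fin n) ℝ) := {A | 0 < A.det}

/-- Polyconvexity: `W(A) = g(A, cof A, det A)` for some convex function `g` of the minors. -/
def Polyconvex {n : ℕ} (W : Matrix (Fin n) (Fin n) ℝ → ℝ) : Prop :=
  ∃ g : Matrix (Fin n) (Fin n) ℝ × Matrix (Fin n) (Fin n) ℝ × ℝ → ℝ,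
    ConvexOn ℝ Set.univ g ∧ ∀ A ∈ GLplus n, W A = g (A, A.adjugate, A.det)

/-- Assumption (W1): `W ≥ 0`, `W ∈ C⁴(GL⁺(n))`, polyconvex, `W(𝟙) = 0`, `DW(𝟙) = 0`. -/
def AssumpW1 {n : ℕ} (W : Matrix (Fin n) (Fin n) ℝ → ℝ) : Prop :=
  (∀ A, 0 ≤ W A) ∧ ContDiffOn ℝ 4 W (GLplus n) ∧ Polyconvex W ∧
    W 1 = 0 ∧ fderiv ℝ W 1 = 0

/-- Assumption (W2): growth estimates with constants `C_{W,1}, C_{W,2}, r_W > 0`. -/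
def AssumpW2 {n : ℕ} (W : Matrix (Fin n) (Fin n) ℝ → ℝ) (CW1 CW2 rW : ℝ) : Prop :=
  0 < CW1 ∧ 0 < CW2 ∧ 0 < rW ∧ ∀ A ∈ GLplus n,
    (frobNorm (A - 1) < rW → CW1 * frobSq (symPart A - 1) ≤ W A) ∧
    (rW ≤ frobNorm (A - 1) → CW2 ≤ W A)

/-- The concrete energy density
`W(A) = (λ/2)(exp((log det A)²) − 1) + μ|A^sym − 𝟙|²`. -/
def Wex {n : ℕ} (lam mu : ℝ) (A : Matrix (Fin n) (Fin n) ℝ) : ℝ :=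
  lam/2 * (Real.exp ((Real.log A.det)^2) - 1) + mu * frobSq (symPart A - 1)

section Aux

private lemma st13_exp_hund : Real.exp (1/100) ≤ 100/99 := by
  have h := Real.add_one_le_exp (-(1/100 : ℝ))
  rw [Real.exp_neg] at h
  have hp : 0 < Real.exp (1/100 : ℝ) := Real.exp_pos _
  rw [inv_eq_one_div, le_div_iff₀ hp] at h
  nlinarith

private lemma st13_xle (x : ℝ) (hx : 0 < x) (h : (Real.log x)^2 < 1/10000) : x ≤ 100/99 := by
  have hl : Real.log x ≤ 1/100 := by nlinarith [sq_nonneg (Real.log x - 1/100)]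
  calc x = Real.exp (Real.log x) := (Real.exp_log hx).symm
    _ ≤ Real.exp (1/100) := Real.exp_le_exp.mpr hl
    _ ≤ 100/99 := st13_exp_hund

private lemma st13_key2 (a b c d : ℝ)
    (hsym : (a-1)^2 + ((b+c)/2)^2 + ((c+b)/2)^2 + (d-1)^2 < 1/10000)
    (hdet : a*d - b*c ≤ 100/99) : (a-1)^2 + b^2 + c^2 + (d-1)^2 < 1 := by
  nlinarith [sq_nonneg (b-c), sq_nonneg (b+c), sq_nonneg (a+d-2), sq_nonneg (a-d),
    sq_nonneg ((a-1)*(d-1))]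

set_option maxHeartbeats 1000000 in
private lemma st13_key3' (d1 d2 d3 s1 s2 s3 p q r : ℝ)
    (hsym : d1^2 + d2^2 + d3^2 + 2*(s1^2 + s2^2 + s3^2) < 1/10000)
    (hdet : ((1+d1)*((1+d2)*(1+d3) - s3^2) - s1*(s1*(1+d3) - s3*s2) + s2*(s1*s3 - (1+d2)*s2))
      + ((1+d1)*r^2 + (1+d2)*q^2 + (1+d3)*p^2 - 2*s1*r*q + 2*s2*r*p - 2*s3*q*p) ≤ 100/99) :
    p^2 + q^2 + r^2 ≤ 12/100 := by
  have bd1 : d1^2 < 1/10000 := by nlinarith only [hsym, sq_nonneg s1, sq_nonneg s2, sq_nonneg s3, sq_nonneg d2, sq_nonneg d3]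
  have bd2 : d2^2 < 1/10000 := by nlinarith only [hsym, sq_nonneg s1, sq_nonneg s2, sq_nonneg s3, sq_nonneg d1, sq_nonneg d3]
  have bd3 : d3^2 < 1/10000 := by nlinarith only [hsym, sq_nonneg s1, sq_nonneg s2, sq_nonneg s3, sq_nonneg d1, sq_nonneg d2]
  have bs1 : s1^2 < 1/10000 := by nlinarith only [hsym, sq_nonneg s2, sq_nonneg s3, sq_nonneg d1, sq_nonneg d2, sq_nonneg d3]
  have bs2 : s2^2 < 1/10000 := by nlinarith only [hsym, sq_nonneg s1, sq_nonneg s3, sq_nonneg d1, sq_nonneg d2, sq_nonneg d3]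
  have bs3 : s3^2 < 1/10000 := by nlinarith only [hsym, sq_nonneg s1, sq_nonneg s2, sq_nonneg d1, sq_nonneg d2, sq_nonneg d3]
  have ld1a : -1/100 < d1 := by nlinarith only [bd1, sq_nonneg (d1 + 1/100)]
  have ld1b : d1 < 1/100 := by nlinarith only [bd1, sq_nonneg (d1 - 1/100)]
  have ld2a : -1/100 < d2 := by nlinarith only [bd2, sq_nonneg (d2 + 1/100)]
  have ld2b : d2 < 1/100 := by nlinarith only [bd2, sq_nonneg (d2 - 1/100)]
  have ld3a : -1/100 < d3 := by nlinarith only [bd3, sq_nonneg (d3 + 1/100)]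
  have ld3b : d3 < 1/100 := by nlinarith only [bd3, sq_nonneg (d3 - 1/100)]
  have ls1a : -1/100 < s1 := by nlinarith only [bs1, sq_nonneg (s1 + 1/100)]
  have ls1b : s1 < 1/100 := by nlinarith only [bs1, sq_nonneg (s1 - 1/100)]
  have ls2a : -1/100 < s2 := by nlinarith only [bs2, sq_nonneg (s2 + 1/100)]
  have ls2b : s2 < 1/100 := by nlinarith only [bs2, sq_nonneg (s2 - 1/100)]
  have ls3a : -1/100 < s3 := by nlinarith only [bs3, sq_nonneg (s3 + 1/100)]
  have ls3b : s3 < 1/100 := by nlinarith only [bs3, sq_nonneg (s3 - 1/100)]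
  have h12 : (99/100:ℝ)*(99/100) ≤ (1+d1)*(1+d2) := by nlinarith only [ld1a, ld2a, ld1b, ld2b]
  have h123 : (99/100:ℝ)*(99/100)*(99/100) ≤ (1+d1)*(1+d2)*(1+d3) := by
    nlinarith only [h12, ld3a, ld3b, ld1a, ld2a, ld1b, ld2b]
  have t2 : (1+d1)*s3^2 ≤ (101/100)*(1/10000) := by nlinarith only [ld1b, bs3, sq_nonneg s3]
  have t3 : (1+d2)*s2^2 ≤ (101/100)*(1/10000) := by nlinarith only [ld2b, bs2, sq_nonneg s2]
  have t4 : (1+d3)*s1^2 ≤ (101/100)*(1/10000) := by nlinarith only [ld3b, bs1, sq_nonneg s1]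
  have t5 : -(1/100)*(s1^2+s2^2) ≤ 2*s1*s2*s3 := by
    nlinarith only [mul_nonneg (by linarith only [ls3a] : (0:ℝ) ≤ 1/100 + s3) (sq_nonneg (s1+s2)),
      mul_nonneg (by linarith only [ls3b] : (0:ℝ) ≤ 1/100 - s3) (sq_nonneg (s1-s2))]
  have hdetS : (9:ℝ)/10 ≤ (1+d1)*((1+d2)*(1+d3) - s3^2) - s1*(s1*(1+d3) - s3*s2) + s2*(s1*s3 - (1+d2)*s2) := by
    linarith only [h123, t2, t3, t4, t5, bs1, bs2]
  have hvSv : (97:ℝ)/100 * (p^2+q^2+r^2) ≤ (1+d1)*r^2 + (1+d2)*q^2 + (1+d3)*p^2 - 2*s1*r*q + 2*s2*r*p - 2*s3*q*p := by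
    linarith only [mul_nonneg (by linarith only [ls1b] : (0:ℝ) ≤ 1/100 - s1) (sq_nonneg (r+q)),
      mul_nonneg (by linarith only [ls1a] : (0:ℝ) ≤ 1/100 + s1) (sq_nonneg (r-q)),
      mul_nonneg (by linarith only [ls2b] : (0:ℝ) ≤ 1/100 - s2) (sq_nonneg (r-p)),
      mul_nonneg (by linarith only [ls2a] : (0:ℝ) ≤ 1/100 + s2) (sq_nonneg (r+p)),
      mul_nonneg (by linarith only [ls3b] : (0:ℝ) ≤ 1/100 - s3) (sq_nonneg (q+p)),
      mul_nonneg (by linarith only [ls3a] : (0:ℝ) ≤ 1/100 + s3) (sq_nonneg (q-p)),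
      mul_nonneg (by linarith only [ld1a] : (0:ℝ) ≤ 1/100 + d1) (sq_nonneg r),
      mul_nonneg (by linarith only [ld2a] : (0:ℝ) ≤ 1/100 + d2) (sq_nonneg q),
      mul_nonneg (by linarith only [ld3a] : (0:ℝ) ≤ 1/100 + d3) (sq_nonneg p)]
  linarith only [hdetS, hvSv, hdet]

private lemma st13_key3 (a b c d e f g h i : ℝ)
    (hsym : (a-1)^2 + ((b+d)/2)^2 + ((c+g)/2)^2 + ((d+b)/2)^2 + (e-1)^2
      + ((f+h)/2)^2 + ((g+c)/2)^2 + ((h+f)/2)^2 + (i-1)^2 < 1/10000)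
    (hdet : a*(e*i - f*h) - b*(d*i - f*g) + c*(d*h - e*g) ≤ 100/99) :
    (a-1)^2 + b^2 + c^2 + d^2 + (e-1)^2 + f^2 + g^2 + h^2 + (i-1)^2 < 1 := by
  have key := st13_key3' (a-1) (e-1) (i-1) ((b+d)/2) ((c+g)/2) ((f+h)/2) ((b-d)/2) ((c-g)/2) ((f-h)/2)
    (by linarith only [hsym]) (by linarith only [hdet])
  linarith only [key, hsym]

end Aux

/-- the concrete energy density satisfies the growth conditions (W2): there
exist `C_{W,1}, C_{W,2}, r_W > 0` with `W(A) ≥ C_{W,1}|A^sym − 𝟙|²` whenever `|A − 𝟙| < r_W`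
and `W(A) ≥ C_{W,2}` whenever `|A − 𝟙| ≥ r_W`, for all `A ∈ GL⁺(n)`. -/
theorem statement13 {n : ℕ} (hn : n = 2 ∨ n = 3) (lam mu : ℝ) (hlam : 0 < lam)
    (hmu : 0 < mu) :
    ∃ CW1 CW2 rW : ℝ, AssumpW2 (Wex (n := n) lam mu) CW1 CW2 rW := by
  refine ⟨mu, min mu (lam/2) / 10000, 1, hmu,
    div_pos (lt_min hmu (by linarith)) (by norm_num), one_pos, ?_⟩
  intro A hA
  have hdetA : 0 < A.det := hA
  have hF0 : 0 ≤ frobSq (symPart A - 1) := by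
    unfold frobSq; positivity
  have hexp : 1 ≤ Real.exp ((Real.log A.det)^2) := Real.one_le_exp (sq_nonneg _)
  constructor
  · intro _
    have h0 : 0 ≤ lam/2 * (Real.exp ((Real.log A.det)^2) - 1) :=
      mul_nonneg (by linarith) (by linarith)
    unfold Wex
    linarith
  · intro hge
    have h0 : 0 ≤ frobSq (A - 1) := by unfold frobSq; positivity
    have h1 : 1 ≤ frobSq (A - 1) := by
      have hs := Real.sq_sqrt h0
      have hge' : (1:ℝ) ≤ Real.sqrt (frobSq (A - 1)) := hge
      nlinarith
    by_cases hF : 1/10000 ≤ frobSq (symPart A - 1)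
    · have h2 : 0 ≤ lam/2 * (Real.exp ((Real.log A.det)^2) - 1) :=
        mul_nonneg (by linarith) (by linarith)
      have h3 : mu * (1/10000) ≤ mu * frobSq (symPart A - 1) :=
        mul_le_mul_of_nonneg_left hF hmu.le
      have h4 : min mu (lam/2) ≤ mu := min_le_left _ _
      unfold Wex
      nlinarith
    · push_neg at hF
      by_cases hL : 1/10000 ≤ (Real.log A.det)^2
      · have he : (Real.log A.det)^2 + 1 ≤ Real.exp ((Real.log A.det)^2) :=
          Real.add_one_le_exp _
        have h4 : min mu (lam/2) ≤ lam/2 := min_le_right _ _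
        have h5 : 0 ≤ mu * frobSq (symPart A - 1) := mul_nonneg hmu.le hF0
        unfold Wex
        nlinarith
      · push_neg at hL
        exfalso
        have hdetle : A.det ≤ 100/99 := st13_xle _ hdetA hL
        rcases hn with rfl | rfl
        · have hsym2 : frobSq (symPart A - 1)
              = (A 0 0 - 1)^2 + ((A 0 1 + A 1 0)/2)^2 + ((A 1 0 + A 0 1)/2)^2
                + (A 1 1 - 1)^2 := by
            simp [frobSq, symPart, Fin.sum_univ_two, Matrix.sub_apply, Matrix.add_apply,
              Matrix.smul_apply, Matrix.transpose_apply, Matrix.one_apply]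
            ring
          have hfs2 : frobSq (A - 1)
              = (A 0 0 - 1)^2 + (A 0 1)^2 + (A 1 0)^2 + (A 1 1 - 1)^2 := by
            simp [frobSq, Fin.sum_univ_two, Matrix.sub_apply, Matrix.one_apply]
            ring
          have hd2 : A.det = A 0 0 * A 1 1 - A 0 1 * A 1 0 := Matrix.det_fin_two A
          have key := st13_key2 (A 0 0) (A 0 1) (A 1 0) (A 1 1)
            (by rw [hsym2] at hF; linarith only [hF])
            (by rw [hd2] at hdetle; linarith only [hdetle])
          rw [hfs2] at h1
          linarith only [key, h1]
        · have hsym3 : frobSq (symPart A - 1)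
              = (A 0 0 - 1)^2 + ((A 0 1 + A 1 0)/2)^2 + ((A 0 2 + A 2 0)/2)^2
                + ((A 1 0 + A 0 1)/2)^2 + (A 1 1 - 1)^2 + ((A 1 2 + A 2 1)/2)^2
                + ((A 2 0 + A 0 2)/2)^2 + ((A 2 1 + A 1 2)/2)^2 + (A 2 2 - 1)^2 := by
            simp [frobSq, symPart, Fin.sum_univ_three, Matrix.sub_apply, Matrix.add_apply,
              Matrix.smul_apply, Matrix.transpose_apply, Matrix.one_apply]
            ring
          have hfs3 : frobSq (A - 1)
              = (A 0 0 - 1)^2 + (A 0 1)^2 + (A 0 2)^2 + (A 1 0)^2 + (A 1 1 - 1)^2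
                + (A 1 2)^2 + (A 2 0)^2 + (A 2 1)^2 + (A 2 2 - 1)^2 := by
            simp [frobSq, Fin.sum_univ_three, Matrix.sub_apply, Matrix.one_apply]
            ring
          have hd3 : A.det = A 0 0 * (A 1 1 * A 2 2 - A 1 2 * A 2 1)
              - A 0 1 * (A 1 0 * A 2 2 - A 1 2 * A 2 0)
              + A 0 2 * (A 1 0 * A 2 1 - A 1 1 * A 2 0) := by
            rw [Matrix.det_fin_three]; ring
          have key := st13_key3 (A 0 0) (A 0 1) (A 0 2) (A 1 0) (A 1 1) (A 1 2)
            (A 2 0) (A 2 1) (A 2 2)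
            (by rw [hsym3] at hF; linarith only [hF])
            (by rw [hd3] at hdetle; linarith only [hdetle])
          rw [hfs3] at h1
          linarith only [key, h1]


end
end
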